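/- Let G be a group, let a, b ∈ G, and let n ≥ 1, p, q be natural numbers. If a^{2n} is a product of p commutators in G and b^{2n} is a product of q commutators in G, then (ab)^{2n} is a product of n + p + q commutators in G. -/

import Mathlib

open scoped commutatorElement

/-- `g` is a product of `k` commutators in `G`. -/
def IsProductOfCommutators {G : Type*} [Group G] (k : ℕ) (g : G) : Prop :=
  ∃ x y : Fin k → G, g = (List.ofFn fun i => ⁅x i, y i⁆).prod

section Aux

variable {G : Type*} [Group G]

private lemma ipc_iff_list {k : ℕ} {g : G} :
    IsProductOfCommutators k g ↔
      ∃ l : List (G × G), l.length = k ∧ g = (l.map fun c => ⁅c.1, c.2⁆).prod := by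
  constructor
  · rintro ⟨x, y, rfl⟩
    refine ⟨List.ofFn fun i => (x i, y i), by simp, ?_⟩
    rw [List.map_ofFn]
    rfl
  · rintro ⟨l, rfl, rfl⟩
    refine ⟨fun i => (l.get i).1, fun i => (l.get i).2, ?_⟩
    have : (List.ofFn fun i => ⁅(l.get i).1, (l.get i).2⁆)
        = (List.ofFn l.get).map fun c => ⁅c.1, c.2⁆ := by
      rw [List.map_ofFn]
      rfl
    rw [this, List.ofFn_get]

private lemma ipc_single (x y : G) : IsProductOfCommutators 1 ⁅x, y⁆ :=
  ipc_iff_list.2 ⟨[(x, y)], rfl, by simp⟩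

private lemma ipc_mul {j k : ℕ} {g h : G} (hg : IsProductOfCommutators j g)
    (hh : IsProductOfCommutators k h) : IsProductOfCommutators (j + k) (g * h) := by
  obtain ⟨l₁, h₁, rfl⟩ := ipc_iff_list.1 hg
  obtain ⟨l₂, h₂, rfl⟩ := ipc_iff_list.1 hh
  exact ipc_iff_list.2 ⟨l₁ ++ l₂, by simp [h₁, h₂], by simp⟩

private lemma conj_prod_comm (c : G) :
    ∀ l : List (G × G),
      ((l.map fun d => ((c * d.1 * c⁻¹, c * d.2 * c⁻¹) : G × G)).map
          fun d => ⁅d.1, d.2⁆).prod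
        = c * (l.map fun d => ⁅d.1, d.2⁆).prod * c⁻¹
  | [] => by simp
  | d :: l => by
      simp only [List.map_cons, List.prod_cons, conj_prod_comm c l]
      simp only [commutatorElement_def]
      group

private lemma ipc_conj {k : ℕ} {g : G} (c : G) (hg : IsProductOfCommutators k g) :
    IsProductOfCommutators k (c * g * c⁻¹) := by
  obtain ⟨l, hl, rfl⟩ := ipc_iff_list.1 hg
  exact ipc_iff_list.2
    ⟨l.map fun d => (c * d.1 * c⁻¹, c * d.2 * c⁻¹), by simp [hl], (conj_prod_comm c l).symm⟩

/-- The key inductive lemma: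
`a^-(k+1) * (ab)^(2k+2) * b^-(2k+2) * a^-(k+1)` is a product of `k+1` commutators. -/
private lemma ipc_key (a b : G) : ∀ k : ℕ, IsProductOfCommutators (k + 1)
    ((a ^ (k + 1))⁻¹ * (a * b) ^ (2 * k + 2) * (b ^ (2 * k + 2))⁻¹ * (a ^ (k + 1))⁻¹)
  | 0 => by
      have h : (a ^ 1)⁻¹ * (a * b) ^ 2 * (b ^ 2)⁻¹ * (a ^ 1)⁻¹ = ⁅b, a⁆ := by
        rw [pow_two]
        group
      show IsProductOfCommutators 1
        ((a ^ 1)⁻¹ * (a * b) ^ 2 * (b ^ 2)⁻¹ * (a ^ 1)⁻¹)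
      rw [h]
      exact ipc_single b a
  | (k + 1) => by
      show IsProductOfCommutators (k + 2)
        ((a ^ (k + 2))⁻¹ * (a * b) ^ (2 * k + 4) * (b ^ (2 * k + 4))⁻¹ * (a ^ (k + 2))⁻¹)
      have hM : (a ^ (k + 2))⁻¹ * (a * b) ^ (2 * k + 4) * (b ^ (2 * k + 4))⁻¹ *
            (a ^ (k + 2))⁻¹
          = (a ^ (k + 1))⁻¹ * b * (a * b) ^ (2 * k + 2) * a * (b ^ (2 * k + 3))⁻¹ *
            (a ^ (k + 2))⁻¹ := by
        have h1 : (a * b) ^ (2 * k + 4) = (a * b) * (a * b) ^ (2 * k + 2) * (a * b) := by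
          rw [show 2 * k + 4 = 1 + (2 * k + 2) + 1 by ring, pow_add, pow_add, pow_one]
        rw [h1]
        generalize (a * b) ^ (2 * k + 2) = u
        group
      have hstep : (a ^ (k + 1))⁻¹ * b * (a * b) ^ (2 * k + 2) * a * (b ^ (2 * k + 3))⁻¹ *
            (a ^ (k + 2))⁻¹
          = a * ((a ^ (k + 1))⁻¹ * (a * b) ^ (2 * k + 2) * (b ^ (2 * k + 2))⁻¹ *
              (a ^ (k + 1))⁻¹) * a⁻¹ *
            ((a ^ (k + 2) * b ^ (2 * k + 1) * a⁻¹ * ((a * b) ^ (2 * k + 1))⁻¹) *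
              ⁅a⁻¹ * b, (a * b) ^ (2 * k + 2) * a⁆ *
             (a ^ (k + 2) * b ^ (2 * k + 1) * a⁻¹ * ((a * b) ^ (2 * k + 1))⁻¹)⁻¹) := by
        have h2 : (a * b) ^ (2 * k + 2) = (a * b) ^ (2 * k + 1) * (a * b) := by
          rw [show 2 * k + 2 = (2 * k + 1) + 1 by omega, pow_succ]
        rw [h2]
        generalize (a * b) ^ (2 * k + 1) = w
        simp only [commutatorElement_def]
        group
      rw [hM, hstep]
      exact ipc_mul (j := k + 1) (k := 1)
        (ipc_conj a (ipc_key a b k))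
        (ipc_conj _ (ipc_single (a⁻¹ * b) ((a * b) ^ (2 * k + 2) * a)))

end Aux

/-- If `a^(2n)` is a product of `p` commutators and `b^(2n)` is a product of `q`
commutators, then `(ab)^(2n)` is a product of `n + p + q` commutators. -/
theorem isProductOfCommutators_mul_pow_two_mul
    {G : Type*} [Group G] (a b : G) (n p q : ℕ) (hn : 1 ≤ n)
    (ha : IsProductOfCommutators p (a ^ (2 * n)))
    (hb : IsProductOfCommutators q (b ^ (2 * n))) :
    IsProductOfCommutators (n + p + q) ((a * b) ^ (2 * n)) := by
  obtain ⟨k, rfl⟩ : ∃ k, n = k + 1 := ⟨n - 1, by omega⟩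
  have hkey := ipc_key a b k
  have hconj := ipc_conj (a ^ (k + 1)) hkey
  have hfin := ipc_mul (ipc_mul hconj ha) hb
  have heq : (a * b) ^ (2 * (k + 1))
      = a ^ (k + 1) *
          ((a ^ (k + 1))⁻¹ * (a * b) ^ (2 * k + 2) * (b ^ (2 * k + 2))⁻¹ *
            (a ^ (k + 1))⁻¹) * (a ^ (k + 1))⁻¹ *
        a ^ (2 * (k + 1)) * b ^ (2 * (k + 1)) := by
    have h0 : 2 * (k + 1) = 2 * k + 2 := by ring
    rw [h0]
    generalize (a * b) ^ (2 * k + 2) = u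
    group
  rw [heq]
  exact hfin
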